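/- Let φ : ℝ → ℝ be defined by φ(t) := sin(t)/(π t) for t ≠ 0 and φ(0) := 1/π. Then for every integer l ≥ 2, the iterated integral ∫_ℝ ⋯ ∫_ℝ φ(−t_2) φ(t_2 − t_3) ⋯ φ(t_{l−1} − t_l) φ(t_l) dt_2 ⋯ dt_l equals 1/π. (In particular, for l = 2, ∫_ℝ (sin t / (π t))² dt = 1/π.) -/

import Mathlib

open MeasureTheory Filter Set

/-- `φ(t) = sin t / (π t)`, with `φ(0) = 1/π`. -/
noncomputable def sincpi (t : ℝ) : ℝ :=
  if t = 0 then 1 / Real.pi else Real.sin t / (Real.pi * t)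

/-- `convIter n` is the `n`-fold successive convolution of `φ` with itself (`n+1` factors):
`convIter (n+1) x = ∫ φ(x - t) convIter n (t) dt`. -/
noncomputable def convIter : ℕ → ℝ → ℝ
  | 0 => sincpi
  | (n+1) => fun x => ∫ t : ℝ, sincpi (x - t) * convIter n t

open scoped Real FourierTransform

namespace SincAux

/-- half-width of the frequency window -/
noncomputable def ac : ℝ := (2 * π)⁻¹

lemma ac_pos : 0 < ac := by
  unfold ac
  positivity

/-- the base interval -/
noncomputable def A : Set ℝ := Icc (-ac) ac

lemma measurableSet_A : MeasurableSet A := measurableSet_Icc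

/-- modulated indicator function -/
noncomputable def mchar (x : ℝ) : ℝ → ℂ :=
  Set.indicator A (fun u => Complex.exp ((2 * π * x * u : ℝ) * Complex.I))

lemma sincpi_even (t : ℝ) : sincpi (-t) = sincpi t := by
  unfold sincpi
  rcases eq_or_ne t 0 with h | h
  · simp [h]
  · rw [if_neg (neg_ne_zero.2 h), if_neg h, Real.sin_neg, mul_neg, neg_div_neg_eq]

lemma measurable_sincpi : Measurable sincpi := by
  unfold sincpi
  exact Measurable.ite (measurableSet_eq)
    measurable_const (Real.measurable_sin.div (measurable_const.mul measurable_id))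

lemma sincpi_sq_le (t : ℝ) : sincpi t ^ 2 ≤ 2 / π ^ 2 * (1 + t ^ 2)⁻¹ := by
  have hπ : (0:ℝ) < π := Real.pi_pos
  rcases eq_or_ne t 0 with h | h
  · subst h
    have h0 : sincpi 0 = 1 / π := by simp [sincpi]
    rw [h0, div_pow, one_pow, show ((1:ℝ) + 0 ^ 2)⁻¹ = 1 by norm_num, mul_one,
      div_le_div_iff₀ (by positivity) (by positivity)]
    nlinarith [sq_nonneg π]
  · rw [sincpi, if_neg h]
    have h1 : Real.sin t ^ 2 ≤ 1 := Real.sin_sq_le_one t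
    have h2 : Real.sin t ^ 2 ≤ t ^ 2 := Real.sin_sq_le_sq
    have hrhs : 2 / π ^ 2 * (1 + t ^ 2)⁻¹ = 2 / (π ^ 2 * (1 + t ^ 2)) := by
      field_simp
    rw [hrhs, div_pow, mul_pow, div_le_div_iff₀ (by positivity) (by positivity)]
    nlinarith [sq_nonneg π, sq_nonneg t, mul_le_mul_of_nonneg_left
      (show Real.sin t ^ 2 * (1 + t ^ 2) ≤ 2 * t ^ 2 by nlinarith) (sq_nonneg π)]

lemma integrable_sincpi_sq : Integrable (fun t : ℝ => sincpi t ^ 2) := by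
  apply Integrable.mono' (integrable_inv_one_add_sq.const_mul (2 / π ^ 2))
  · exact (measurable_sincpi.pow_const 2).aestronglyMeasurable
  · refine Eventually.of_forall fun t => ?_
    rw [Real.norm_eq_abs, abs_of_nonneg (sq_nonneg _)]
    exact sincpi_sq_le t

lemma integrable_conv_prod (x : ℝ) :
    Integrable (fun t : ℝ => sincpi (x - t) * sincpi t) := by
  have h1 : Integrable (fun t : ℝ => sincpi (x - t) ^ 2) :=
    ((integrable_sincpi_sq).comp_sub_left x : _)
  apply Integrable.mono' (((h1.add integrable_sincpi_sq)).const_mul (1 / 2))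
  · exact ((measurable_sincpi.comp (measurable_const.sub measurable_id)).mul
      measurable_sincpi).aestronglyMeasurable
  · refine Eventually.of_forall fun t => ?_
    rw [Real.norm_eq_abs, abs_mul]
    simp only [Pi.add_apply]
    nlinarith [sq_nonneg (|sincpi (x - t)| - |sincpi t|), sq_abs (sincpi (x - t)),
      sq_abs (sincpi t), abs_nonneg (sincpi (x - t)), abs_nonneg (sincpi t)]

/-- The key explicit integral computing the Fourier transform of the window. -/
lemma key_int (s : ℝ) :
    (∫ u in (-ac)..ac, Complex.exp ((2 * π * s * u : ℝ) * Complex.I)) = (sincpi s : ℂ) := by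
  have hπ : (π : ℝ) ≠ 0 := Real.pi_ne_zero
  rcases eq_or_ne s 0 with hs | hs
  · subst hs
    simp only [sincpi, if_pos rfl]
    have : ∀ u : ℝ, ((2 * π * (0:ℝ) * u : ℝ) : ℂ) * Complex.I = 0 := by
      intro u; push_cast; ring
    simp only [this, Complex.exp_zero]
    rw [intervalIntegral.integral_const, Complex.real_smul, mul_one]
    unfold ac
    have hπc : (π : ℂ) ≠ 0 := by exact_mod_cast hπ
    push_cast
    field_simp
    norm_num
  · have hc : ((2 * π * s : ℝ) : ℂ) * Complex.I ≠ 0 := by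
      apply mul_ne_zero _ Complex.I_ne_zero
      exact_mod_cast mul_ne_zero (mul_ne_zero two_ne_zero (by exact_mod_cast hπ)) hs
    have heq : ∀ u : ℝ, ((2 * π * s * u : ℝ) : ℂ) * Complex.I
        = (((2 * π * s : ℝ) : ℂ) * Complex.I) * (u : ℂ) := by
      intro u; push_cast; ring
    rw [intervalIntegral.integral_congr (g := fun u : ℝ =>
      Complex.exp ((((2 * π * s : ℝ) : ℂ) * Complex.I) * (u : ℂ)))
      (fun u _ => by rw [heq u])]
    rw [integral_exp_mul_complex hc]
    have hπc : (π : ℂ) ≠ 0 := by exact_mod_cast hπ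
    have hsc : (s : ℂ) ≠ 0 := by exact_mod_cast hs
    have ha1 : (((2 * π * s : ℝ) : ℂ) * Complex.I) * (ac : ℂ) = (s : ℂ) * Complex.I := by
      unfold ac
      push_cast
      field_simp
    have ha2 : (((2 * π * s : ℝ) : ℂ) * Complex.I) * ((-ac : ℝ) : ℂ)
        = (-(s : ℂ)) * Complex.I := by
      unfold ac
      push_cast
      field_simp
    rw [ha1, ha2, Complex.exp_mul_I, Complex.exp_mul_I]
    rw [Complex.cos_neg, Complex.sin_neg]
    rw [sincpi, if_neg hs]
    rw [show ((Real.sin s / (π * s) : ℝ) : ℂ)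
        = Complex.sin (s : ℂ) / ((π : ℂ) * (s : ℂ)) by
      push_cast [Complex.ofReal_sin]; ring]
    have hden : ((π:ℂ) * s) ≠ 0 := mul_ne_zero hπc hsc
    rw [div_eq_div_iff hc hden]
    push_cast
    ring

lemma integrable_mchar (x : ℝ) : Integrable (mchar x) := by
  apply IntegrableOn.integrable_indicator _ measurableSet_A
  apply Continuous.integrableOn_Icc
  fun_prop

lemma fourier_mchar (x t : ℝ) : 𝓕 (mchar x) t = ((sincpi (x - t) : ℝ) : ℂ) := by
  rw [Real.fourier_real_eq_integral_exp_smul]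
  have hpt : ∀ v : ℝ, Complex.exp ((-2 * π * v * t : ℝ) * Complex.I) • mchar x v
      = Set.indicator A (fun u => Complex.exp ((2 * π * (x - t) * u : ℝ) * Complex.I)) v := by
    intro v
    unfold mchar
    rw [smul_eq_mul]
    by_cases hv : v ∈ A
    · rw [Set.indicator_of_mem hv, Set.indicator_of_mem hv, ← Complex.exp_add]
      congr 1
      push_cast
      ring
    · rw [Set.indicator_of_notMem hv, Set.indicator_of_notMem hv, mul_zero]
  rw [integral_congr_ae (Eventually.of_forall hpt)]
  rw [integral_indicator measurableSet_A]
  unfold A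
  rw [integral_Icc_eq_integral_Ioc,
    ← intervalIntegral.integral_of_le (by linarith [ac_pos])]
  exact key_int (x - t)

lemma mchar_zero_apply (u : ℝ) :
    mchar 0 u = Set.indicator A (fun _ => (1:ℂ)) u := by
  unfold mchar
  congr 1
  funext v
  norm_num

/-- the product in the convolution integrand, as an indicator. -/
lemma mchar_mul (x y u : ℝ) :
    mchar x u * mchar 0 (y - u)
      = Set.indicator (A ∩ Icc (y - ac) (y + ac))
          (fun u => Complex.exp ((2 * π * x * u : ℝ) * Complex.I)) u := by
  rw [mchar_zero_apply]
  unfold mchar A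
  by_cases h1 : u ∈ Icc (-ac) ac
  · by_cases h2 : u ∈ Icc (y - ac) (y + ac)
    · have h3 : y - u ∈ Icc (-ac) ac := by
        rw [mem_Icc] at h2 ⊢
        constructor <;> linarith [h2.1, h2.2]
      rw [Set.indicator_of_mem h1, Set.indicator_of_mem h3,
        Set.indicator_of_mem (mem_inter h1 h2), mul_one]
    · have h3 : y - u ∉ Icc (-ac) ac := by
        rw [mem_Icc] at h2 ⊢
        push_neg at h2 ⊢
        intro hge
        by_cases hu : y - ac ≤ u
        · linarith [h2 hu]
        · linarith [not_le.1 hu]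
      rw [Set.indicator_of_notMem h3, mul_zero,
        Set.indicator_of_notMem (fun hmem => h2 hmem.2)]
  · rw [Set.indicator_of_notMem h1, zero_mul,
      Set.indicator_of_notMem (fun hmem => h1 hmem.1)]

lemma w_eq (x y : ℝ) :
    (∫ u : ℝ, mchar x u * mchar 0 (y - u))
      = ∫ u in A ∩ Icc (y - ac) (y + ac),
          Complex.exp ((2 * π * x * u : ℝ) * Complex.I) := by
  rw [integral_congr_ae (Eventually.of_forall (fun u => mchar_mul x y u))]
  exact integral_indicator (measurableSet_A.inter measurableSet_Icc)

lemma A_inter_zero : A ∩ Icc ((0:ℝ) - ac) (0 + ac) = A := by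
  rw [zero_sub, zero_add]
  exact inter_eq_left.2 (fun u hu => hu)

lemma w_zero (x : ℝ) :
    (∫ u : ℝ, mchar x u * mchar 0 ((0:ℝ) - u)) = ((sincpi x : ℝ) : ℂ) := by
  rw [w_eq, A_inter_zero]
  unfold A
  rw [integral_Icc_eq_integral_Ioc,
    ← intervalIntegral.integral_of_le (by linarith [ac_pos])]
  exact key_int x

lemma integrableOn_exp_A (x : ℝ) :
    IntegrableOn (fun u : ℝ => Complex.exp ((2 * π * x * u : ℝ) * Complex.I)) A := by
  apply Continuous.integrableOn_Icc
  fun_prop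

lemma norm_w_sub (x y : ℝ) :
    ‖(∫ u : ℝ, mchar x u * mchar 0 (y - u))
      - ∫ u : ℝ, mchar x u * mchar 0 ((0:ℝ) - u)‖ ≤ |y| := by
  have hg : ∀ u : ℝ, ‖Complex.exp ((2 * π * x * u : ℝ) * Complex.I)‖ = 1 := by
    intro u
    rw [Complex.norm_exp_ofReal_mul_I]
  set g : ℝ → ℂ := fun u => Complex.exp ((2 * π * x * u : ℝ) * Complex.I) with hgdef
  set B : Set ℝ := Icc (y - ac) (y + ac) with hB
  rw [w_eq, w_eq, A_inter_zero]
  have hsub : A ∩ B ⊆ A := inter_subset_left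
  have hdiff := integral_diff (μ := volume) (f := g)
    (measurableSet_A.inter measurableSet_Icc) (integrableOn_exp_A x) hsub
  have hre : (∫ u in A ∩ B, g u) - ∫ u in A, g u = -∫ u in A \ (A ∩ B), g u := by
    rw [hdiff]; ring
  rw [hre, norm_neg]
  have hAfin : volume (A \ (A ∩ B)) < ⊤ := by
    apply lt_of_le_of_lt (measure_mono (diff_subset : A \ (A ∩ B) ⊆ A))
    unfold A
    rw [Real.volume_Icc]
    exact ENNReal.ofReal_lt_top
  have hbound := norm_setIntegral_le_of_norm_le_const (μ := volume) (f := g) (C := 1)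
    hAfin
    (fun u _ => le_of_eq (hg u))
  · refine le_trans hbound ?_
    rw [one_mul]
    have hvsub : A \ (A ∩ B) ⊆ Ico (-ac) (y - ac) ∪ Ioc (y + ac) ac := by
      rw [diff_self_inter]
      rintro u ⟨huA, huB⟩
      unfold A at huA
      rw [mem_Icc] at huA
      rw [hB, mem_Icc, not_and_or, not_le, not_le] at huB
      rcases huB with h | h
      · exact Or.inl ⟨huA.1, h⟩
      · exact Or.inr ⟨h, huA.2⟩
    have hv : volume (A \ (A ∩ B)) ≤ ENNReal.ofReal |y| := by
      refine le_trans (measure_mono hvsub) ?_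
      refine le_trans (measure_union_le _ _) ?_
      rw [Real.volume_Ico, Real.volume_Ioc]
      rcases le_total 0 y with hy | hy
      · rw [ENNReal.ofReal_of_nonpos (show ac - (y + ac) ≤ 0 by linarith), add_zero]
        exact ENNReal.ofReal_le_ofReal (by rw [abs_of_nonneg hy]; linarith)
      · rw [ENNReal.ofReal_of_nonpos (show y - ac - -ac ≤ 0 by linarith), zero_add]
        exact ENNReal.ofReal_le_ofReal (by rw [abs_of_nonpos hy]; linarith)
    exact ENNReal.toReal_le_of_le_ofReal (abs_nonneg y) hv

lemma w_contAt (x : ℝ) :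
    ContinuousAt (fun y : ℝ => ∫ u : ℝ, mchar x u * mchar 0 (y - u)) 0 := by
  have hb := norm_w_sub x
  have h0 : Tendsto (fun y : ℝ =>
      (∫ u : ℝ, mchar x u * mchar 0 (y - u))
        - ∫ u : ℝ, mchar x u * mchar 0 ((0:ℝ) - u)) (nhds 0) (nhds 0) := by
    apply squeeze_zero_norm hb
    have : Tendsto (fun y : ℝ => |y|) (nhds 0) (nhds |0|) :=
      (continuous_abs.tendsto 0)
    simpa using this
  have := h0.add_const (∫ u : ℝ, mchar x u * mchar 0 ((0:ℝ) - u))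
  simp only [sub_add_cancel, zero_add] at this
  exact this

lemma w_integrable (x : ℝ) :
    Integrable (fun y : ℝ => ∫ u : ℝ, mchar x u * mchar 0 (y - u)) := by
  have h := (integrable_mchar x).integrable_convolution
    (ContinuousLinearMap.mul ℂ ℂ) (integrable_mchar 0)
  have heq : (convolution (mchar x) (mchar 0) (ContinuousLinearMap.mul ℂ ℂ) volume)
      = fun y : ℝ => ∫ u : ℝ, mchar x u * mchar 0 (y - u) := by
    funext y
    rw [convolution_def]
    rfl
  rwa [heq] at h

/-- Convolution theorem for the Fourier integral on `ℝ`. -/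
lemma fourier_conv {p q : ℝ → ℂ} (hp : Integrable p) (hq : Integrable q) (ξ : ℝ) :
    𝓕 (fun y : ℝ => ∫ u : ℝ, p u * q (y - u)) ξ = 𝓕 p ξ * 𝓕 q ξ := by
  have hconv : Integrable (fun z : ℝ × ℝ => p z.2 * q (z.1 - z.2))
      ((volume : Measure ℝ).prod volume) := by
    have := hp.convolution_integrand (ContinuousLinearMap.mul ℂ ℂ) hq
    simpa using this
  have hbig : Integrable (Function.uncurry fun y u : ℝ =>
      Complex.exp ((-2 * π * y * ξ : ℝ) * Complex.I) * (p u * q (y - u)))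
      ((volume : Measure ℝ).prod volume) := by
    have : Integrable (fun z : ℝ × ℝ =>
        Complex.exp ((-2 * π * z.1 * ξ : ℝ) * Complex.I) * (p z.2 * q (z.1 - z.2)))
        ((volume : Measure ℝ).prod volume) := by
      apply hconv.bdd_mul (c := 1)
      · apply Continuous.aestronglyMeasurable
        fun_prop
      · refine Eventually.of_forall fun z => ?_
        rw [Complex.norm_exp_ofReal_mul_I]
    exact this
  rw [Real.fourier_real_eq_integral_exp_smul]
  have step1 : (∫ v : ℝ, Complex.exp ((-2 * π * v * ξ : ℝ) * Complex.I) •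
        (∫ u : ℝ, p u * q (v - u)))
      = ∫ v : ℝ, ∫ u : ℝ,
          Complex.exp ((-2 * π * v * ξ : ℝ) * Complex.I) * (p u * q (v - u)) := by
    apply integral_congr_ae
    refine Eventually.of_forall fun v => ?_
    simp only [smul_eq_mul, integral_const_mul]
  rw [step1, integral_integral_swap hbig]
  have inner : ∀ u : ℝ,
      (∫ y : ℝ, Complex.exp ((-2 * π * y * ξ : ℝ) * Complex.I) * (p u * q (y - u)))
        = (Complex.exp ((-2 * π * u * ξ : ℝ) * Complex.I) * p u)
            * ∫ y : ℝ, Complex.exp ((-2 * π * y * ξ : ℝ) * Complex.I) * q y := by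
    intro u
    rw [← integral_add_right_eq_self (fun y : ℝ =>
      Complex.exp ((-2 * π * y * ξ : ℝ) * Complex.I) * (p u * q (y - u))) u]
    have hpt : ∀ y : ℝ,
        Complex.exp ((-2 * π * (y + u) * ξ : ℝ) * Complex.I) * (p u * q (y + u - u))
          = (Complex.exp ((-2 * π * u * ξ : ℝ) * Complex.I) * p u)
              * (Complex.exp ((-2 * π * y * ξ : ℝ) * Complex.I) * q y) := by
      intro y
      rw [add_sub_cancel_right]
      rw [show ((-2 * π * (y + u) * ξ : ℝ) : ℂ) * Complex.I
          = ((-2 * π * y * ξ : ℝ) : ℂ) * Complex.I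
            + ((-2 * π * u * ξ : ℝ) : ℂ) * Complex.I by push_cast; ring]
      rw [Complex.exp_add]
      ring
    rw [integral_congr_ae (Eventually.of_forall hpt)]
    rw [integral_const_mul]
  rw [integral_congr_ae (Eventually.of_forall inner)]
  rw [integral_mul_const]
  congr 1
  · rw [Real.fourier_real_eq_integral_exp_smul]
    apply integral_congr_ae
    refine Eventually.of_forall fun u => ?_
    simp only [smul_eq_mul]
  · rw [Real.fourier_real_eq_integral_exp_smul]
    apply integral_congr_ae
    refine Eventually.of_forall fun y => ?_
    simp only [smul_eq_mul]

lemma fourier_w (x t : ℝ) :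
    𝓕 (fun y : ℝ => ∫ u : ℝ, mchar x u * mchar 0 (y - u)) t
      = ((sincpi (x - t) : ℝ) : ℂ) * ((sincpi t : ℝ) : ℂ) := by
  rw [fourier_conv (integrable_mchar x) (integrable_mchar 0) t,
    fourier_mchar, fourier_mchar, zero_sub, sincpi_even]

lemma fw_integrable (x : ℝ) :
    Integrable (𝓕 (fun y : ℝ => ∫ u : ℝ, mchar x u * mchar 0 (y - u))) := by
  have h : Integrable (fun t : ℝ => ((sincpi (x - t) * sincpi t : ℝ) : ℂ)) :=
    (integrable_conv_prod x).ofReal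
  apply h.congr
  refine Eventually.of_forall fun t => ?_
  rw [fourier_w]
  simp only [Complex.ofReal_mul]

lemma conv_complex (x : ℝ) :
    (∫ t : ℝ, ((sincpi (x - t) : ℝ) : ℂ) * ((sincpi t : ℝ) : ℂ))
      = ((sincpi x : ℝ) : ℂ) := by
  have hinv := (w_integrable x).fourierInv_fourier_eq (fw_integrable x) (w_contAt x)
  rw [w_zero] at hinv
  rw [Real.fourierInv_eq] at hinv
  simp only [inner_zero_right, AddChar.map_zero_eq_one, one_smul] at hinv
  rw [integral_congr_ae (Eventually.of_forall (fun t => (fourier_w x t)))] at hinv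
  exact hinv

lemma conv_real (x : ℝ) :
    (∫ t : ℝ, sincpi (x - t) * sincpi t) = sincpi x := by
  have h := conv_complex x
  have h2 : (∫ t : ℝ, ((sincpi (x - t) * sincpi t : ℝ) : ℂ)) = ((sincpi x : ℝ) : ℂ) := by
    rw [integral_congr_ae (Eventually.of_forall (fun t : ℝ => by
      simp only [Complex.ofReal_mul] :
      ∀ t : ℝ, ((sincpi (x - t) * sincpi t : ℝ) : ℂ)
        = ((sincpi (x - t) : ℝ) : ℂ) * ((sincpi t : ℝ) : ℂ)))]
    exact h
  have h3 : (∫ t : ℝ, ((sincpi (x - t) * sincpi t : ℝ) : ℂ))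
      = ((∫ t : ℝ, sincpi (x - t) * sincpi t : ℝ) : ℂ) := integral_ofReal
  rw [h3] at h2
  exact_mod_cast h2

lemma convIter_eq : ∀ n : ℕ, convIter n = sincpi := by
  intro n
  induction n with
  | zero => rfl
  | succ n ih =>
      funext x
      show (∫ t : ℝ, sincpi (x - t) * convIter n t) = sincpi x
      rw [ih]
      exact conv_real x

end SincAux

/-- For every `l ≥ 2`, the iterated integral
`∫⋯∫ φ(-t₂) φ(t₂-t₃) ⋯ φ(t_{l-1}-t_l) φ(t_l) dt₂ ⋯ dt_l = 1/π`;
in particular `∫ (sin t/(π t))² dt = 1/π`. -/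
theorem iterated_sinc_integral :
    (∀ l : ℕ, 2 ≤ l → convIter (l - 1) 0 = 1 / Real.pi) ∧
    (∫ t : ℝ, (Real.sin t / (Real.pi * t))^2) = 1 / Real.pi := by
  constructor
  · intro l _
    rw [SincAux.convIter_eq]
    simp [sincpi]
  · have h2 : (∫ t : ℝ, (Real.sin t / (Real.pi * t))^2)
        = ∫ t : ℝ, sincpi ((0:ℝ) - t) * sincpi t := by
      apply integral_congr_ae
      have h0 : ({(0:ℝ)}ᶜ : Set ℝ) ∈ ae (volume : Measure ℝ) :=
        compl_mem_ae_iff.2 (measure_singleton 0)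
      filter_upwards [h0] with t ht
      have htne : t ≠ 0 := ht
      rw [zero_sub, SincAux.sincpi_even]
      rw [show sincpi t = Real.sin t / (Real.pi * t) from by rw [sincpi, if_neg htne]]
      ring
    rw [h2, SincAux.conv_real 0]
    simp [sincpi]
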